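/- Let λ_1, λ2 ∈ ℝ_{≥0}. Define Δ(λ_1, λ_2) ⊆ ℝ³ by: 0 ≤ a ≤ λ_2, λ_2 ≤ c ≤ λ_1 + λ_2, 0 ≤ b ≤ c − a. Then Δ(λ_1, λ_2) equals the Minkowski sum λ_1·Δ(1,0) + λ_2·Δ(0,1), where Δ(1,0) = {(a,b,c) : a = 0, 0 ≤ c ≤ 1, 0 ≤ b ≤ c} and Δ(0,1) = {(a,b,c) : 0 ≤ a ≤ 1, c = 1, 0 ≤ b ≤ 1 − a}. -/
import Mathlib


open Pointwise

lemma mem_smul_d1 (l b c : ℝ) (hl : 0 ≤ l) (hb : 0 ≤ b) (hbc : b ≤ c) (hc : c ≤ l) :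
    ((0 : ℝ), b, c) ∈
      l • {p : ℝ × ℝ × ℝ | p.1 = 0 ∧ 0 ≤ p.2.2 ∧ p.2.2 ≤ 1 ∧ 0 ≤ p.2.1 ∧ p.2.1 ≤ p.2.2} := by
  rcases eq_or_lt_of_le hl with h | h
  · have hc0 : c = 0 := le_antisymm (by linarith) (by linarith)
    have hb0 : b = 0 := le_antisymm (by linarith) hb
    refine ⟨(0, 0, 0), ⟨rfl, le_refl 0, zero_le_one, le_refl 0, le_refl 0⟩, ?_⟩
    simp [hb0, hc0, Prod.ext_iff]
  · refine ⟨(0, b / l, c / l), ⟨rfl, div_nonneg (by linarith) hl,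
      by rw [div_le_one h]; linarith, div_nonneg hb hl,
      by exact div_le_div_of_nonneg_right hbc hl⟩, ?_⟩
    simp only [Prod.smul_mk, smul_eq_mul, Prod.ext_iff]
    refine ⟨by ring, by field_simp, by field_simp⟩

lemma mem_smul_d2 (l a b : ℝ) (hl : 0 ≤ l) (ha : 0 ≤ a) (hb : 0 ≤ b) (hab : a + b ≤ l) :
    ((a : ℝ), b, l) ∈
      l • {p : ℝ × ℝ × ℝ | 0 ≤ p.1 ∧ p.1 ≤ 1 ∧ p.2.2 = 1 ∧ 0 ≤ p.2.1 ∧ p.2.1 ≤ 1 - p.1} := by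
  rcases eq_or_lt_of_le hl with h | h
  · have ha0 : a = 0 := le_antisymm (by linarith) ha
    have hb0 : b = 0 := le_antisymm (by linarith) hb
    refine ⟨(0, 0, 1), ⟨le_refl 0, zero_le_one, rfl, le_refl 0, by norm_num⟩, ?_⟩
    simp [ha0, hb0, ← h, Prod.ext_iff]
  · refine ⟨(a / l, b / l, 1), ⟨div_nonneg ha hl, by rw [div_le_one h]; linarith, rfl,
      div_nonneg hb hl, ?_⟩, ?_⟩
    · show b / l ≤ 1 - a / l
      rw [div_le_iff₀ h, sub_mul, one_mul, div_mul_cancel₀ _ h.ne']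
      linarith
    · simp only [Prod.smul_mk, smul_eq_mul, Prod.ext_iff]
      refine ⟨by field_simp, by field_simp, by ring⟩

/-- Minkowski decomposition of the marked chain-order polytope of type `A₂`
(`C = {q₁⁽²⁾}`, `O = {q₁⁽¹⁾, q₂⁽¹⁾}`):
`Δ(λ₁,λ₂) = λ₁ • Δ(1,0) + λ₂ • Δ(0,1)`. -/
theorem stmt9 (l1 l2 : ℝ) (h1 : 0 ≤ l1) (h2 : 0 ≤ l2) :
    {p : ℝ × ℝ × ℝ | 0 ≤ p.1 ∧ p.1 ≤ l2 ∧ l2 ≤ p.2.2 ∧ p.2.2 ≤ l1 + l2 ∧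
        0 ≤ p.2.1 ∧ p.2.1 ≤ p.2.2 - p.1}
      = l1 • {p : ℝ × ℝ × ℝ | p.1 = 0 ∧ 0 ≤ p.2.2 ∧ p.2.2 ≤ 1 ∧ 0 ≤ p.2.1 ∧ p.2.1 ≤ p.2.2}
        + l2 • {p : ℝ × ℝ × ℝ | 0 ≤ p.1 ∧ p.1 ≤ 1 ∧ p.2.2 = 1 ∧ 0 ≤ p.2.1 ∧
            p.2.1 ≤ 1 - p.1} := by
  ext ⟨a, b, c⟩
  constructor
  · rintro ⟨ha0, hal2, hl2c, hc, hb0, hbc⟩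
    set b1 := min b (c - l2) with hb1
    set b2 := b - b1 with hb2
    have hcl2 : 0 ≤ c - l2 := by linarith
    have hb10 : 0 ≤ b1 := le_min hb0 hcl2
    have hb1c : b1 ≤ c - l2 := min_le_right _ _
    have hb20 : 0 ≤ b2 := by simp [hb2]; exact min_le_left _ _
    have hab2 : a + b2 ≤ l2 := by
      rcases le_total b (c - l2) with h | h
      · simp [hb2, hb1, min_eq_left h]; linarith
      · simp [hb2, hb1, min_eq_right h]; linarith
    refine Set.mem_add.2 ⟨(0, b1, c - l2), mem_smul_d1 l1 b1 (c - l2) h1 hb10 hb1c (by linarith),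
      (a, b2, l2), mem_smul_d2 l2 a b2 h2 ha0 hb20 hab2, ?_⟩
    simp [Prod.ext_iff, hb2]
  · rintro ⟨x, ⟨⟨q1, q2, q3⟩, ⟨hq1, hq2, hq3, hq4, hq5⟩, hx⟩,
      y, ⟨⟨r1, r2, r3⟩, ⟨hr1, hr2, hr3, hr4, hr5⟩, hy⟩, hxy⟩
    simp only [Set.mem_setOf_eq] at hq1 hq2 hq3 hq4 hq5 hr1 hr2 hr3 hr4 hr5 ⊢
    subst hq1 hr3 hx hy
    simp only [Prod.smul_mk, smul_eq_mul, Prod.mk_add_mk, Prod.mk.injEq] at hxy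
    obtain ⟨hA, hB, hC⟩ := hxy
    subst hA hB hC
    refine ⟨by positivity, by nlinarith, by nlinarith, by nlinarith, by positivity, by nlinarith⟩
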